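/- Suppose Y(t) ⊥ T | V (exchangeability given V) and Y(t) ⊥ V | P_t(V), where P_t is a measurable function of V. Then Y(t) ⊥ (V, T) | P_t(V). -/

import Mathlib

open ProbabilityTheory MeasureTheory Set

namespace PrognosticAux

variable {Ω : Type*} {mΩ : MeasurableSpace Ω} {μ : Measure Ω} [IsFiniteMeasure μ]

lemma integrable_indicator_one {s : Set Ω} (hs : MeasurableSet s) :
    Integrable (s.indicator (fun _ => (1 : ℝ))) μ :=
  (integrable_const 1).indicator hs

lemma mul_indicator_one_eq {s : Set Ω} (u : Ω → ℝ) :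
    (fun ω => u ω * s.indicator (fun _ => (1:ℝ)) ω) = s.indicator u := by
  funext ω; by_cases h : ω ∈ s <;> simp [h]

lemma indicator_mul_comm {s : Set Ω} (u w : Ω → ℝ) :
    s.indicator (fun ω => u ω * w ω) = fun ω => u ω * s.indicator w ω := by
  funext ω; by_cases h : ω ∈ s <;> simp [h]

lemma condexp_indicator_one_norm_le {m : MeasurableSpace Ω} {mΩ : MeasurableSpace Ω}
    {μ : Measure Ω} [IsFiniteMeasure μ] (hm : m ≤ mΩ) (s : Set Ω) :
    ∀ᵐ ω ∂μ, ‖(μ⟦s | m⟧) ω‖ ≤ 1 := by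
  have h0 : (0 : Ω → ℝ) ≤ᵐ[μ] μ⟦s | m⟧ :=
    condExp_nonneg (Filter.Eventually.of_forall fun ω => Set.indicator_nonneg (fun _ _ => zero_le_one) ω)
  have h1 : μ⟦s | m⟧ ≤ᵐ[μ] μ[(fun _ => (1:ℝ)) | m] := by
    by_cases hint : Integrable (s.indicator (fun _ => (1:ℝ))) μ
    · exact condExp_mono hint (integrable_const 1)
        (Filter.Eventually.of_forall fun ω => Set.indicator_le_self' (fun _ _ => zero_le_one) ω)
    · rw [condExp_of_not_integrable hint, condExp_const hm (1:ℝ)]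
      exact Filter.Eventually.of_forall fun ω => zero_le_one
  rw [condExp_const hm (1:ℝ)] at h1
  filter_upwards [h0, h1] with ω h0 h1
  rw [Real.norm_eq_abs, abs_le]
  refine ⟨by simpa using (neg_nonpos.mpr zero_le_one).trans (by simpa using h0), h1⟩

end PrognosticAux

namespace PrognosticAux

variable {Ω : Type*} {m₀ mV : MeasurableSpace Ω} {mΩ : MeasurableSpace Ω} {μ : Measure Ω}
  [IsFiniteMeasure μ]

/-- If `A` is conditionally independent (in the condexp sense) of every `mV`-measurable set
given `m₀ ≤ mV`, then conditioning on `mV` is the same as conditioning on `m₀`. -/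
lemma condexp_indicator_eq_of_mul (hm₀V : m₀ ≤ mV) (hmV : mV ≤ mΩ)
    {A : Set Ω} (hA : MeasurableSet[mΩ] A)
    (h : ∀ s : Set Ω, MeasurableSet[mV] s →
      (μ⟦A ∩ s | m₀⟧) =ᵐ[μ] fun ω => (μ⟦A | m₀⟧) ω * (μ⟦s | m₀⟧) ω) :
    (μ⟦A | mV⟧) =ᵐ[μ] (μ⟦A | m₀⟧) := by
  have hm₀ : m₀ ≤ mΩ := hm₀V.trans hmV
  haveI : SigmaFinite (μ.trim hmV) := by
    haveI : IsFiniteMeasure (μ.trim hmV) := isFiniteMeasure_trim hmV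
    infer_instance
  refine (ae_eq_condExp_of_forall_setIntegral_eq hmV (integrable_indicator_one hA)
    (fun s _ _ => integrable_condExp.integrableOn) (fun s hs _ => ?_)
    (stronglyMeasurable_condExp.mono hm₀V).aestronglyMeasurable).symm
  have hsΩ : MeasurableSet[mΩ] s := hmV s hs
  have hbd := condexp_indicator_one_norm_le (μ := μ) hm₀ A
  have hint_s : Integrable (s.indicator fun _ => (1:ℝ)) μ := integrable_indicator_one hsΩ
  have hint_mul : Integrable (fun ω => (μ⟦A | m₀⟧) ω * s.indicator (fun _ => (1:ℝ)) ω) μ :=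
    hint_s.bdd_mul (stronglyMeasurable_condExp.mono hm₀).aestronglyMeasurable hbd
  have h2 : μ[(fun ω => (μ⟦A | m₀⟧) ω * s.indicator (fun _ => (1:ℝ)) ω) | m₀] =ᵐ[μ]
      fun ω => (μ⟦A | m₀⟧) ω * (μ⟦s | m₀⟧) ω :=
    condExp_mul_of_stronglyMeasurable_left stronglyMeasurable_condExp hint_mul hint_s
  calc ∫ ω in s, (μ⟦A | m₀⟧) ω ∂μ
      = ∫ ω, (μ⟦A | m₀⟧) ω * s.indicator (fun _ => (1:ℝ)) ω ∂μ := by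
        rw [← integral_indicator (μ := μ) hsΩ, ← mul_indicator_one_eq]
    _ = ∫ ω, (μ[(fun ω => (μ⟦A | m₀⟧) ω * s.indicator (fun _ => (1:ℝ)) ω) | m₀]) ω ∂μ :=
        (integral_condExp hm₀).symm
    _ = ∫ ω, (μ⟦A ∩ s | m₀⟧) ω ∂μ := by
        refine integral_congr_ae (h2.trans (h s hs).symm)
    _ = ∫ ω, (A ∩ s).indicator (fun _ => (1:ℝ)) ω ∂μ :=
        integral_condExp hm₀
    _ = ∫ ω in s, A.indicator (fun _ => (1:ℝ)) ω ∂μ := by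
        rw [← integral_indicator (μ := μ) hsΩ, Set.indicator_indicator, Set.inter_comm]

end PrognosticAux

open PrognosticAux

/-- If `Y(t) ⊥ T | V` (exchangeability given `V`) and `Y(t) ⊥ V | P_t(V)` where `P_t` is a
measurable function of `V`, then `Y(t) ⊥ (V, T) | P_t(V)`. -/
theorem prognostic_score_screens_off
    {Ω : Type*} {mΩ : MeasurableSpace Ω} [StandardBorelSpace Ω]
    {μ : Measure Ω} [IsFiniteMeasure μ]
    {𝒱 β 𝒯 : Type*} [MeasurableSpace 𝒱] [MeasurableSpace β] [MeasurableSpace 𝒯]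
    {n : ℕ}
    (Yt : Ω → β) (T : Ω → 𝒯) (V : Ω → 𝒱) (Pt : 𝒱 → (Fin n → ℝ))
    (hY : Measurable Yt) (hT : Measurable T) (hV : Measurable V) (hP : Measurable Pt)
    (hexch : CondIndepFun (MeasurableSpace.comap V inferInstance) hV.comap_le Yt T μ)
    (hpgs : CondIndepFun (MeasurableSpace.comap (fun ω => Pt (V ω)) inferInstance)
      ((hP.comp hV).comap_le) Yt V μ) :
    CondIndepFun (MeasurableSpace.comap (fun ω => Pt (V ω)) inferInstance)
      ((hP.comp hV).comap_le) Yt (fun ω => (V ω, T ω)) μ := by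
  have hmV : MeasurableSpace.comap V inferInstance ≤ mΩ := hV.comap_le
  have hm₀ : MeasurableSpace.comap (fun ω => Pt (V ω)) inferInstance ≤ mΩ :=
    (hP.comp hV).comap_le
  have hm₀V : MeasurableSpace.comap (fun ω => Pt (V ω)) inferInstance
      ≤ MeasurableSpace.comap V inferInstance := by
    intro s hs
    obtain ⟨t, ht, rfl⟩ := hs
    exact ⟨Pt ⁻¹' t, hP ht, rfl⟩
  haveI : SigmaFinite (μ.trim hmV) := by
    haveI : IsFiniteMeasure (μ.trim hmV) := isFiniteMeasure_trim hmV
    infer_instance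
  -- Step A: conditioning on σ(V) is the same as conditioning on σ(Pt ∘ V)
  have hsA : ∀ A : Set β, MeasurableSet A →
      (μ⟦Yt ⁻¹' A | MeasurableSpace.comap V inferInstance⟧) =ᵐ[μ]
      (μ⟦Yt ⁻¹' A | MeasurableSpace.comap (fun ω => Pt (V ω)) inferInstance⟧) := by
    intro A hA
    refine condexp_indicator_eq_of_mul hm₀V hmV (hY hA) ?_
    intro s hs
    obtain ⟨B, hB, rfl⟩ := hs
    exact ((condIndepFun_iff_condExp_inter_preimage_eq_mul hY hV).mp hpgs) A B hA hB
  -- Key computation on rectangles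
  have key : ∀ (A : Set β) (B : Set 𝒱) (C : Set 𝒯), MeasurableSet A → MeasurableSet B →
      MeasurableSet C →
      (μ⟦Yt ⁻¹' A ∩ (V ⁻¹' B ∩ T ⁻¹' C) | MeasurableSpace.comap (fun ω => Pt (V ω)) inferInstance⟧)
        =ᵐ[μ] fun ω => (μ⟦Yt ⁻¹' A | MeasurableSpace.comap (fun ω => Pt (V ω)) inferInstance⟧) ω *
          (μ⟦V ⁻¹' B ∩ T ⁻¹' C | MeasurableSpace.comap (fun ω => Pt (V ω)) inferInstance⟧) ω := by
    intro A B C hA hB hC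
    have hVB : MeasurableSet[MeasurableSpace.comap V inferInstance] (V ⁻¹' B) := ⟨B, hB, rfl⟩
    -- the indicator of the triple intersection, seen as a V⁻¹B-indicator
    have e1 : (Yt ⁻¹' A ∩ (V ⁻¹' B ∩ T ⁻¹' C)).indicator (fun _ => (1:ℝ))
        = (V ⁻¹' B).indicator ((Yt ⁻¹' A ∩ T ⁻¹' C).indicator (fun _ => (1:ℝ))) := by
      rw [Set.indicator_indicator, Set.inter_left_comm]
    have e3 : (μ⟦Yt ⁻¹' A ∩ T ⁻¹' C | MeasurableSpace.comap V inferInstance⟧) =ᵐ[μ]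
        fun ω => (μ⟦Yt ⁻¹' A | MeasurableSpace.comap (fun ω => Pt (V ω)) inferInstance⟧) ω *
          (μ⟦T ⁻¹' C | MeasurableSpace.comap V inferInstance⟧) ω := by
      refine ((condIndepFun_iff_condExp_inter_preimage_eq_mul hY hT).mp hexch A C hA hC).trans ?_
      filter_upwards [hsA A hA] with ω h
      rw [h]
    have e2 : (μ⟦Yt ⁻¹' A ∩ (V ⁻¹' B ∩ T ⁻¹' C) | MeasurableSpace.comap V inferInstance⟧) =ᵐ[μ]
        fun ω => (μ⟦Yt ⁻¹' A | MeasurableSpace.comap (fun ω => Pt (V ω)) inferInstance⟧) ω *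
          ((V ⁻¹' B).indicator (μ⟦T ⁻¹' C | MeasurableSpace.comap V inferInstance⟧)) ω := by
      rw [show (μ⟦Yt ⁻¹' A ∩ (V ⁻¹' B ∩ T ⁻¹' C) | MeasurableSpace.comap V inferInstance⟧)
          = μ[(V ⁻¹' B).indicator ((Yt ⁻¹' A ∩ T ⁻¹' C).indicator (fun _ => (1:ℝ)))
              | MeasurableSpace.comap V inferInstance] from by rw [← e1]]
      refine (condExp_indicator (integrable_indicator_one ((hY hA).inter (hT hC))) hVB).trans ?_
      filter_upwards [e3] with ω h3
      by_cases hω : ω ∈ V ⁻¹' B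
      · simp only [Set.indicator_of_mem hω, h3]
      · simp only [Set.indicator_of_notMem hω, mul_zero]
    -- integrability facts
    have hq_int : Integrable ((V ⁻¹' B).indicator
        (μ⟦T ⁻¹' C | MeasurableSpace.comap V inferInstance⟧)) μ :=
      integrable_condExp.indicator (hV hB)
    have hbd := condexp_indicator_one_norm_le (μ := μ) hm₀ (Yt ⁻¹' A)
    have hmul_int : Integrable (fun ω =>
        (μ⟦Yt ⁻¹' A | MeasurableSpace.comap (fun ω => Pt (V ω)) inferInstance⟧) ω *
        ((V ⁻¹' B).indicator (μ⟦T ⁻¹' C | MeasurableSpace.comap V inferInstance⟧)) ω) μ :=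
      hq_int.bdd_mul (stronglyMeasurable_condExp.mono hm₀).aestronglyMeasurable hbd
    -- pull-out
    have e5 := condExp_mul_of_stronglyMeasurable_left (μ := μ)
      (m := MeasurableSpace.comap (fun ω => Pt (V ω)) inferInstance)
      (f := μ⟦Yt ⁻¹' A | MeasurableSpace.comap (fun ω => Pt (V ω)) inferInstance⟧)
      (g := (V ⁻¹' B).indicator (μ⟦T ⁻¹' C | MeasurableSpace.comap V inferInstance⟧))
      stronglyMeasurable_condExp hmul_int hq_int
    -- identify the inner conditional expectation
    have e6 : (μ[(V ⁻¹' B).indicator (μ⟦T ⁻¹' C | MeasurableSpace.comap V inferInstance⟧)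
        | MeasurableSpace.comap (fun ω => Pt (V ω)) inferInstance]) =ᵐ[μ]
        (μ⟦V ⁻¹' B ∩ T ⁻¹' C | MeasurableSpace.comap (fun ω => Pt (V ω)) inferInstance⟧) := by
      have h7 : (V ⁻¹' B).indicator (μ⟦T ⁻¹' C | MeasurableSpace.comap V inferInstance⟧) =ᵐ[μ]
          (μ⟦V ⁻¹' B ∩ T ⁻¹' C | MeasurableSpace.comap V inferInstance⟧) := by
        have h8 := condExp_indicator (μ := μ) (m := MeasurableSpace.comap V inferInstance)
          (integrable_indicator_one (hT hC)) hVB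
        rw [Set.indicator_indicator] at h8
        exact h8.symm
      exact (condExp_congr_ae h7).trans (condExp_condExp_of_le hm₀V hmV)
    -- assemble
    calc (μ⟦Yt ⁻¹' A ∩ (V ⁻¹' B ∩ T ⁻¹' C)
          | MeasurableSpace.comap (fun ω => Pt (V ω)) inferInstance⟧)
        =ᵐ[μ] μ[(μ⟦Yt ⁻¹' A ∩ (V ⁻¹' B ∩ T ⁻¹' C) | MeasurableSpace.comap V inferInstance⟧)
          | MeasurableSpace.comap (fun ω => Pt (V ω)) inferInstance] :=
          (condExp_condExp_of_le hm₀V hmV).symm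
      _ =ᵐ[μ] μ[(fun ω =>
            (μ⟦Yt ⁻¹' A | MeasurableSpace.comap (fun ω => Pt (V ω)) inferInstance⟧) ω *
            ((V ⁻¹' B).indicator (μ⟦T ⁻¹' C | MeasurableSpace.comap V inferInstance⟧)) ω)
          | MeasurableSpace.comap (fun ω => Pt (V ω)) inferInstance] := condExp_congr_ae e2
      _ =ᵐ[μ] fun ω =>
            (μ⟦Yt ⁻¹' A | MeasurableSpace.comap (fun ω => Pt (V ω)) inferInstance⟧) ω *
            (μ[(V ⁻¹' B).indicator (μ⟦T ⁻¹' C | MeasurableSpace.comap V inferInstance⟧)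
              | MeasurableSpace.comap (fun ω => Pt (V ω)) inferInstance]) ω := e5
      _ =ᵐ[μ] fun ω =>
            (μ⟦Yt ⁻¹' A | MeasurableSpace.comap (fun ω => Pt (V ω)) inferInstance⟧) ω *
            (μ⟦V ⁻¹' B ∩ T ⁻¹' C
              | MeasurableSpace.comap (fun ω => Pt (V ω)) inferInstance⟧) ω := by
          filter_upwards [e6] with ω h6
          rw [h6]
  -- wrap up via π-systems
  rw [condIndepFun_iff_condIndep]
  set p2 : Set (Set Ω) := {s : Set Ω | ∃ B C, MeasurableSet B ∧ MeasurableSet C ∧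
    s = V ⁻¹' B ∩ T ⁻¹' C} with hp2def
  have hcomap_pair : MeasurableSpace.comap (fun ω => (V ω, T ω)) inferInstance
      = MeasurableSpace.generateFrom p2 := by
    conv_lhs => rw [← generateFrom_prod]
    rw [MeasurableSpace.comap_generateFrom]
    congr 1
    ext s
    simp only [Set.mem_image, Set.mem_image2, Set.mem_setOf_eq, hp2def]
    constructor
    · rintro ⟨t, ⟨B, hB, C, hC, rfl⟩, rfl⟩
      exact ⟨B, C, hB, hC, (Set.mk_preimage_prod V T).symm⟩
    · rintro ⟨B, C, hB, hC, rfl⟩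
      exact ⟨B ×ˢ C, ⟨B, hB, C, hC, rfl⟩, Set.mk_preimage_prod V T⟩
  refine CondIndepSets.condIndep (p1 := {s : Set Ω |
      MeasurableSet[MeasurableSpace.comap Yt inferInstance] s}) (p2 := p2)
    hY.comap_le (hV.prodMk hT).comap_le ?_ ?_ ?_ hcomap_pair ?_
  · exact @MeasurableSpace.isPiSystem_measurableSet Ω (MeasurableSpace.comap Yt inferInstance)
  · rintro s ⟨B₁, C₁, hB₁, hC₁, rfl⟩ t ⟨B₂, C₂, hB₂, hC₂, rfl⟩ -
    refine ⟨B₁ ∩ B₂, C₁ ∩ C₂, hB₁.inter hB₂, hC₁.inter hC₂, ?_⟩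
    ext ω
    simp only [Set.mem_inter_iff, Set.mem_preimage]
    tauto
  · exact (@MeasurableSpace.generateFrom_measurableSet Ω
      (MeasurableSpace.comap Yt inferInstance)).symm
  · rw [condIndepSets_iff]
    · rintro t1 t2 ⟨A, hA, rfl⟩ ⟨B, C, hB, hC, rfl⟩
      exact key A B C hA hB hC
    · rintro s ⟨A, hA, rfl⟩
      exact hY hA
    · rintro s ⟨B, C, hB, hC, rfl⟩
      exact (hV hB).inter (hT hC)
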